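/- The block sGS iteration x^{k+1} = x^k + Ĥ^{-1}(b − Q x^k), where Ĥ = (D+U)D^{-1}(D+U^*), satisfies: x^{k+1} is the unique minimizer over x of (1/2)⟨x, Qx⟩ − ⟨b, x⟩ + (1/2)‖x − x^k‖²_T, where T = U D^{-1} U^*. -/

import Mathlib

open Matrix

private lemma quad_key {N : ℕ} (H : Matrix (Fin N) (Fin N) ℝ) (hsym : Hᵀ = H)
    (c xn : Fin N → ℝ) (hxn : H *ᵥ xn = c) (x : Fin N → ℝ) :
    (1/2) * (x ⬝ᵥ H *ᵥ x) - c ⬝ᵥ x =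
      (1/2) * (xn ⬝ᵥ H *ᵥ xn) - c ⬝ᵥ xn
        + (1/2) * ((x - xn) ⬝ᵥ H *ᵥ (x - xn)) := by
  have hswap : ∀ u v : Fin N → ℝ, u ⬝ᵥ H *ᵥ v = v ⬝ᵥ H *ᵥ u := by
    intro u v
    rw [dotProduct_mulVec, ← mulVec_transpose, hsym, dotProduct_comm]
  subst hxn
  simp only [mulVec_sub, dotProduct_sub, sub_dotProduct]
  rw [hswap xn x, dotProduct_comm (H *ᵥ xn) x, dotProduct_comm (H *ᵥ xn) xn]
  ring

theorem stmt14 {N s : ℕ} (β : Fin N → Fin s) (Q D U : Matrix (Fin N) (Fin N) ℝ)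
    (hQ : Q.PosSemidef) (hD : D.PosDef)
    (hDblock : ∀ i j, β i ≠ β j → D i j = 0)
    (hUupper : ∀ i j, ¬ β i < β j → U i j = 0)
    (hdecomp : Q = U + D + Uᵀ)
    (b xk xnew : Fin N → ℝ)
    (hxnew : xnew = xk + ((D + U) * D⁻¹ * (D + Uᵀ))⁻¹ *ᵥ (b - Q *ᵥ xk))
    (f : (Fin N → ℝ) → ℝ)
    (hf : ∀ x, f x = (1/2) * (x ⬝ᵥ (Q *ᵥ x)) - b ⬝ᵥ x
      + (1/2) * ((x - xk) ⬝ᵥ ((U * D⁻¹ * Uᵀ) *ᵥ (x - xk)))) :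
    (∀ x, f xnew ≤ f x) ∧ (∀ x, (∀ y, f x ≤ f y) → x = xnew) := by
  set T : Matrix (Fin N) (Fin N) ℝ := U * D⁻¹ * Uᵀ with hT
  set H : Matrix (Fin N) (Fin N) ℝ := (D + U) * D⁻¹ * (D + Uᵀ) with hH
  have hDsym : Dᵀ = D := hD.isHermitian.eq
  have hQsym : Qᵀ = Q := hQ.isHermitian.eq
  have hDinv : D.PosDef := hD
  have hDinvPD : D⁻¹.PosDef := hD.inv
  have hDiu : IsUnit D.det := isUnit_iff_ne_zero.mpr hD.det_pos.ne'
  have hDDi : D * D⁻¹ = 1 := mul_nonsing_inv D hDiu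
  have hDiD : D⁻¹ * D = 1 := nonsing_inv_mul D hDiu
  have hDisym : (D⁻¹)ᵀ = D⁻¹ := by rw [transpose_nonsing_inv, hDsym]
  have hTsym : Tᵀ = T := by
    rw [hT, transpose_mul, transpose_mul, hDisym, transpose_transpose, mul_assoc]
  -- H = Q + T
  have hHQT : H = Q + T := by
    rw [hH, hdecomp, hT]
    rw [add_mul, add_mul, hDDi, one_mul, mul_add, mul_assoc U D⁻¹ D, hDiD, mul_one]
    abel
  have hHsym : Hᵀ = H := by
    rw [hHQT, transpose_add, hQsym, hTsym]
  -- quadratic form of T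
  have hTquad : ∀ v : Fin N → ℝ, v ⬝ᵥ T *ᵥ v = (Uᵀ *ᵥ v) ⬝ᵥ D⁻¹ *ᵥ (Uᵀ *ᵥ v) := by
    intro v
    rw [hT, mul_assoc, ← mulVec_mulVec, dotProduct_mulVec, ← mulVec_transpose, mulVec_mulVec]
  have hTpsd : ∀ v : Fin N → ℝ, 0 ≤ v ⬝ᵥ T *ᵥ v := by
    intro v
    rw [hTquad]
    simpa using hDinvPD.posSemidef.dotProduct_mulVec_nonneg (Uᵀ *ᵥ v)
  have hQpsd : ∀ v : Fin N → ℝ, 0 ≤ v ⬝ᵥ Q *ᵥ v := by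
    intro v; simpa using hQ.dotProduct_mulVec_nonneg v
  -- H is positive definite
  have hHpd : H.PosDef := by
    refine posDef_iff_dotProduct_mulVec.mpr ⟨?_, ?_⟩
    · show Hᴴ = H
      rw [conjTranspose_eq_transpose_of_trivial, hHsym]
    · intro v hv
      simp only [star_trivial]
      rw [hHQT, add_mulVec, dotProduct_add]
      by_cases hUv : Uᵀ *ᵥ v = 0
      · have hQv : v ⬝ᵥ Q *ᵥ v = v ⬝ᵥ D *ᵥ v := by
          rw [hdecomp, add_mulVec, add_mulVec, dotProduct_add, dotProduct_add]
          have h1 : v ⬝ᵥ U *ᵥ v = 0 := by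
            rw [dotProduct_mulVec, ← mulVec_transpose, hUv, zero_dotProduct]
          have h2 : v ⬝ᵥ Uᵀ *ᵥ v = 0 := by rw [hUv, dotProduct_zero]
          rw [h1, h2]; ring
        have hTv : v ⬝ᵥ T *ᵥ v = 0 := by
          rw [hTquad, hUv]; simp
        rw [hQv, hTv, add_zero]
        simpa using hD.dotProduct_mulVec_pos hv
      · have hTv : 0 < v ⬝ᵥ T *ᵥ v := by
          rw [hTquad]
          simpa using hDinvPD.dotProduct_mulVec_pos hUv
        have := hQpsd v
        linarith
  have hHiu : IsUnit H.det := isUnit_iff_ne_zero.mpr hHpd.det_pos.ne'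
  have hHHi : H * H⁻¹ = 1 := mul_nonsing_inv H hHiu
  -- H xnew = b + T xk
  have hHxnew : H *ᵥ xnew = b + T *ᵥ xk := by
    rw [hxnew, mulVec_add, mulVec_mulVec, hHHi, one_mulVec, hHQT, add_mulVec]
    abel
  -- f x = g x + const with g the H-quadratic
  set c : Fin N → ℝ := b + T *ᵥ xk with hc
  have hfg : ∀ x, f x = (1/2) * (x ⬝ᵥ H *ᵥ x) - c ⬝ᵥ x + (1/2) * (xk ⬝ᵥ T *ᵥ xk) := by
    intro x
    rw [hf, hHQT, add_mulVec, dotProduct_add, hc, add_dotProduct]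
    have hswapT : (T *ᵥ xk) ⬝ᵥ x = x ⬝ᵥ T *ᵥ xk := dotProduct_comm _ _
    have hswapT2 : xk ⬝ᵥ T *ᵥ x = x ⬝ᵥ T *ᵥ xk := by
      rw [dotProduct_mulVec, ← mulVec_transpose, hTsym, dotProduct_comm]
    rw [hswapT]
    simp only [mulVec_sub, dotProduct_sub, sub_dotProduct, hswapT2]
    ring
  have key : ∀ x, f x = f xnew + (1/2) * ((x - xnew) ⬝ᵥ H *ᵥ (x - xnew)) := by
    intro x
    rw [hfg x, hfg xnew, quad_key H hHsym c xnew hHxnew x]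
    ring
  have hHpsd : ∀ v : Fin N → ℝ, 0 ≤ v ⬝ᵥ H *ᵥ v := by
    intro v; simpa using hHpd.posSemidef.dotProduct_mulVec_nonneg v
  constructor
  · intro x
    rw [key x]
    have := hHpsd (x - xnew)
    linarith
  · intro x hmin
    have h1 : f x ≤ f xnew := hmin xnew
    have h2 : f xnew ≤ f x := by
      rw [key x]
      have := hHpsd (x - xnew)
      linarith
    have hq : (x - xnew) ⬝ᵥ H *ᵥ (x - xnew) = 0 := by
      have := key x
      linarith
    by_contra hne
    have hvne : x - xnew ≠ 0 := sub_ne_zero_of_ne hne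
    have := hHpd.dotProduct_mulVec_pos hvne
    simp only [star_trivial] at this
    rw [hq] at this
    exact lt_irrefl 0 this
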